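/- In ℕ^4, the intersection of the six subsemigroups generated respectively by G1 = {(1,0,0,0),(0,1,0,0),(1,0,1,0),(0,1,0,1)}, G2 = {(0,0,0,1),(1,0,0,1),(1,0,1,0),(0,1,0,1)}, G3 = {(1,0,0,0),(2,0,0,1),(1,0,1,0),(0,1,0,1)}, G4 = {(0,0,0,1),(0,0,1,0),(1,0,1,0),(0,1,0,1)}, G5 = {(0,1,0,0),(0,0,1,0),(1,0,1,0),(0,1,0,1)}, G6 = {(2,0,0,1),(1,0,0,1),(1,0,1,0),(0,1,0,1)} equals the subsemigroup generated by {(1,0,1,0), (0,1,0,1)}. -/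

import Mathlib

/-- A generic linear invariant of additive submonoid closures in `Fin 4 → ℕ`. -/
lemma closure_invariant {S : Set (Fin 4 → ℕ)} (c : Fin 4 → ℕ) (d : Fin 4 → ℕ)
    (h : ∀ v ∈ S, ∑ i, c i * v i ≤ ∑ i, d i * v i) :
    ∀ x ∈ AddSubmonoid.closure S, ∑ i, c i * x i ≤ ∑ i, d i * x i := by
  intro x hx
  induction hx using AddSubmonoid.closure_induction with
  | mem v hv => exact h v hv
  | zero => simp
  | add a b _ _ ha hb =>
      simp only [Pi.add_apply, Nat.mul_add, Finset.sum_add_distrib]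
      exact Nat.add_le_add ha hb

theorem adapted_cones_B2_intersection :
    (AddSubmonoid.closure {![1,0,0,0], ![0,1,0,0], ![1,0,1,0], ![0,1,0,1]} :
        AddSubmonoid (Fin 4 → ℕ)) ⊓
    AddSubmonoid.closure {![0,0,0,1], ![1,0,0,1], ![1,0,1,0], ![0,1,0,1]} ⊓
    AddSubmonoid.closure {![1,0,0,0], ![2,0,0,1], ![1,0,1,0], ![0,1,0,1]} ⊓
    AddSubmonoid.closure {![0,0,0,1], ![0,0,1,0], ![1,0,1,0], ![0,1,0,1]} ⊓
    AddSubmonoid.closure {![0,1,0,0], ![0,0,1,0], ![1,0,1,0], ![0,1,0,1]} ⊓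
    AddSubmonoid.closure {![2,0,0,1], ![1,0,0,1], ![1,0,1,0], ![0,1,0,1]}
      = AddSubmonoid.closure {![1,0,1,0], ![0,1,0,1]} := by
  apply le_antisymm
  · intro x hx
    obtain ⟨⟨⟨⟨⟨h1, h2⟩, _⟩, _⟩, h5⟩, _⟩ := hx
    -- from G1: x 2 ≤ x 0 and x 3 ≤ x 1
    have i1 : ∑ i, ![0,0,1,0] i * x i ≤ ∑ i, ![1,0,0,0] i * x i := by
      refine closure_invariant _ _ ?_ x h1
      rintro v (rfl | rfl | rfl | rfl) <;> decide
    have i2 : ∑ i, ![0,0,0,1] i * x i ≤ ∑ i, ![0,1,0,0] i * x i := by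
      refine closure_invariant _ _ ?_ x h1
      rintro v (rfl | rfl | rfl | rfl) <;> decide
    -- from G5: x 0 ≤ x 2
    have i5 : ∑ i, ![1,0,0,0] i * x i ≤ ∑ i, ![0,0,1,0] i * x i := by
      refine closure_invariant _ _ ?_ x h5
      rintro v (rfl | rfl | rfl | rfl) <;> decide
    -- from G2: x 0 + x 1 ≤ x 2 + x 3
    have i3 : ∑ i, ![1,1,0,0] i * x i ≤ ∑ i, ![0,0,1,1] i * x i := by
      refine closure_invariant _ _ ?_ x h2
      rintro v (rfl | rfl | rfl | rfl) <;> decide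
    simp [Fin.sum_univ_four] at i1 i2 i3 i5
    have hx02 : x 0 = x 2 := le_antisymm i5 i1
    have hx13 : x 1 = x 3 := by omega
    have : x = x 2 • ![1,0,1,0] + x 3 • ![0,1,0,1] := by
      funext i
      fin_cases i <;> simp <;> omega
    rw [this]
    exact AddSubmonoid.add_mem _
      (AddSubmonoid.nsmul_mem _ (AddSubmonoid.subset_closure (by simp)) _)
      (AddSubmonoid.nsmul_mem _ (AddSubmonoid.subset_closure (by simp)) _)
  · refine le_inf (le_inf (le_inf (le_inf (le_inf ?_ ?_) ?_) ?_) ?_) ?_ <;>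
      exact AddSubmonoid.closure_mono (by intro v hv; simp at hv ⊢; tauto)
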